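/- In the same setting (p_vol(x|θ,γ) = f(d(x,θ)², γ) on a Riemannian homogeneous space M), the Fisher information matrix with respect to γ is independent of θ: for all ν₁, ν₂ ∈ M, I_γ(ν₁, γ) = I_γ(ν₂, γ). -/
import Mathlib

open MeasureTheory

/- STATEMENT 19: For a distance-determined family p_vol(x|θ,γ) = f(d(x,θ)²,γ) on a
Riemannian homogeneous space (isometries acting transitively and preserving the volume
measure), the Fisher information matrix with respect to γ — the expectation of the
negative Hessian H of log f in γ — is independent of θ: I_γ(ν₁,γ) = I_γ(ν₂,γ). -/
theorem fisher_gamma_independent_of_location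
    {M : Type*} [MetricSpace M] [MeasurableSpace M] (vol : Measure M)
    {m : ℕ} (f : ℝ → (Fin m → ℝ) → ℝ)
    (H : ℝ → (Fin m → ℝ) → Matrix (Fin m) (Fin m) ℝ)
    (hH : ∀ (s : ℝ) (γ : Fin m → ℝ) (i j : Fin m),
      H s γ i j =
        - deriv (fun a =>
            deriv (fun b =>
                Real.log (f s (Function.update (Function.update γ i a) j b)))
              ((Function.update γ i a) j)) (γ i))
    (hom : ∀ ν₁ ν₂ : M, ∃ g : M → M,
      Isometry g ∧ MeasurePreserving g vol vol ∧ g ν₁ = ν₂)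
    (γ : Fin m → ℝ) :
    ∀ (ν₁ ν₂ : M) (i j : Fin m),
      ∫ x, H (dist x ν₁ ^ 2) γ i j * f (dist x ν₁ ^ 2) γ ∂vol
        = ∫ x, H (dist x ν₂ ^ 2) γ i j * f (dist x ν₂ ^ 2) γ ∂vol := by
  intro ν₁ ν₂ i j
  set F : ℝ → ℝ := fun s => H s γ i j * f s γ with hF
  show ∫ x, F (dist x ν₁ ^ 2) ∂vol = ∫ x, F (dist x ν₂ ^ 2) ∂vol
  -- pointwise transport along an isometry sending a to b
  have hdist : ∀ (a b : M) (g : M → M), Isometry g → g a = b →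
      ∀ x, F (dist (g x) b ^ 2) = F (dist x a ^ 2) := by
    intro a b g hg hgab x
    rw [← hgab, hg.dist_eq]
  -- AESM transfer
  have meas_transfer : ∀ a b : M,
      AEStronglyMeasurable (fun x => F (dist x a ^ 2)) vol →
      AEStronglyMeasurable (fun x => F (dist x b ^ 2)) vol := by
    intro a b hmeas
    obtain ⟨g, hg, hmp, hgab⟩ := hom b a
    have : AEStronglyMeasurable (fun x => F (dist x a ^ 2)) (Measure.map g vol) := by
      rwa [hmp.map_eq]
    have hcomp := this.comp_aemeasurable hmp.measurable.aemeasurable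
    have : (fun x => F (dist x a ^ 2)) ∘ g = fun x => F (dist x b ^ 2) := by
      funext x
      simp only [Function.comp]
      exact hdist b a g hg hgab x
    rwa [this] at hcomp
  by_cases h2 : AEStronglyMeasurable (fun x => F (dist x ν₂ ^ 2)) vol
  · obtain ⟨g, hg, hmp, hgab⟩ := hom ν₁ ν₂
    have h2' : AEStronglyMeasurable (fun x => F (dist x ν₂ ^ 2)) (Measure.map g vol) := by
      rwa [hmp.map_eq]
    calc ∫ x, F (dist x ν₁ ^ 2) ∂vol
        = ∫ x, F (dist (g x) ν₂ ^ 2) ∂vol := by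
          congr 1; funext x; rw [hdist ν₁ ν₂ g hg hgab x]
      _ = ∫ y, F (dist y ν₂ ^ 2) ∂(Measure.map g vol) :=
          (integral_map hmp.measurable.aemeasurable h2').symm
      _ = ∫ x, F (dist x ν₂ ^ 2) ∂vol := by rw [hmp.map_eq]
  · have h1 : ¬ AEStronglyMeasurable (fun x => F (dist x ν₁ ^ 2)) vol :=
      fun h => h2 (meas_transfer ν₁ ν₂ h)
    rw [integral_undef (fun h => h1 h.1), integral_undef (fun h => h2 h.1)]
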